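/- Consider the correlated SBM posterior given adjacency matrices A, B, the community labels σ*² in G_2, the pruned singleton set S*, and the restriction of π* to [n] \ S*. Then there is a constant C₂ (depending only on the conditioning data) such that for every permutation π, P(π* = π | A, B, σ*², S*, π*{[n]\S*}) = C₂ · (√(p₁₀q₀₀/(p₀₀q₁₀)))^{ν⁺(π) − ν⁻(π)} · 1(π ∈ A*), where A* is the set of permutations π with S_π = S* and π{[n]\S_π} = π*{[n]\S*}. -/

import Mathlib

open MeasureTheory Finset
open scoped Classical

/-- Joint probability of the correlated edge-indicator pair `(A_{ij}, B'_{ij})`. -/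
noncomputable def pairP (p q s : ℝ) (same : Bool) (x y : Bool) : ℝ :=
  if x && y then s ^ 2 * (if same then p else q)
  else if x || y then s * (1 - s) * (if same then p else q)
  else 1 - (2 * s - s ^ 2) * (if same then p else q)

/-- `R_π`: the singletons of the intersection graph `G₁ ∧_π G₂` (here `a`, `b` are the
adjacency indicators of `G₁` and `G₂`). -/
def Rset (n : ℕ) (a b : Fin n → Fin n → Bool) (π : Equiv.Perm (Fin n)) : Set (Fin n) :=
  {i | ∀ j, ¬(a i j = true ∧ b (π i) (π j) = true)}

/-- `S_π`: the pruned singleton set: `i ∈ R_π`, `i` has no `G₁`-edge to `R_π`, and every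
`G₁`-neighbor `j` of `i` satisfies that `π(j)` has no `G₂`-neighbor in `π(R_π)`. -/
def Sset (n : ℕ) (a b : Fin n → Fin n → Bool) (π : Equiv.Perm (Fin n)) : Set (Fin n) :=
  {i | i ∈ Rset n a b π ∧ (∀ j ∈ Rset n a b π, a i j = false) ∧
       ∀ j, a i j = true → ∀ k ∈ Rset n a b π, b (π j) (π k) = false}


lemma prod_pairs_pow {n : ℕ} (w : ℝ) (e : Fin n → Fin n → ℕ) :
    (∏ i : Fin n, ∏ j : Fin n, if i < j then w ^ e i j else 1)
      = w ^ (∑ i : Fin n, ∑ j : Fin n, if i < j then e i j else 0) := by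
  have h : ∀ i j : Fin n, (if i < j then w ^ e i j else 1) = w ^ (if i < j then e i j else 0) := by
    intro i j; split <;> simp
  simp_rw [h, Finset.prod_pow_eq_pow_sum]

lemma sum_pairs_reindex {n : ℕ} (g : Fin n → Fin n → ℕ) (hg : ∀ u v, g u v = g v u)
    (π : Equiv.Perm (Fin n)) :
    (∑ i : Fin n, ∑ j : Fin n, if i < j then g (π i) (π j) else 0) =
    ∑ i : Fin n, ∑ j : Fin n, if i < j then g i j else 0 := by
  classical
  have key : ∀ h : Fin n → Fin n → ℕ, (∀ u v, h u v = h v u) →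
      2 * (∑ i : Fin n, ∑ j : Fin n, if i < j then h i j else 0)
        = ∑ i : Fin n, ∑ j : Fin n, if i ≠ j then h i j else 0 := by
    intro h hh
    have split : ∀ i j : Fin n, (if i ≠ j then h i j else 0)
        = (if i < j then h i j else 0) + (if j < i then h i j else 0) := by
      intro i j
      rcases lt_trichotomy i j with hlt | heq | hgt
      · simp [hlt, hlt.ne, not_lt.mpr hlt.le]
      · simp [heq]
      · simp [hgt, hgt.ne', not_lt.mpr hgt.le]
    have swap : (∑ i : Fin n, ∑ j : Fin n, if j < i then h i j else 0)
        = ∑ i : Fin n, ∑ j : Fin n, if i < j then h i j else 0 := by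
      rw [Finset.sum_comm]
      refine Finset.sum_congr rfl fun i _ => Finset.sum_congr rfl fun j _ => ?_
      rw [hh]
    simp_rw [split, Finset.sum_add_distrib, swap, two_mul]
  have reidx : (∑ i : Fin n, ∑ j : Fin n, if i ≠ j then g (π i) (π j) else 0)
      = ∑ i : Fin n, ∑ j : Fin n, if i ≠ j then g i j else 0 := by
    have h1 : ∀ i j : Fin n, (if i ≠ j then g (π i) (π j) else 0)
        = (if π i ≠ π j then g (π i) (π j) else 0) := by
      intro i j
      simp [EmbeddingLike.apply_eq_iff_eq]
    simp_rw [h1]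
    rw [← Equiv.sum_comp π (fun u => ∑ j : Fin n, if u ≠ j then g u j else 0)]
    refine Finset.sum_congr rfl fun i _ => ?_
    exact Equiv.sum_comp π (fun v => if π i ≠ v then g (π i) v else 0)
  have h2 := key (fun u v => g (π u) (π v)) (fun u v => hg _ _)
  have h3 := key g hg
  omega

lemma pow_split (ap aq : ℝ) (hap : 0 < ap) (haq : 0 < aq) (m k : ℕ) :
    ap ^ m * aq ^ k
      = (Real.sqrt (ap/aq)) ^ ((m:ℤ) - (k:ℤ)) * (Real.sqrt (ap*aq)) ^ (m + k) := by
  have hr0 : 0 < Real.sqrt (ap/aq) := Real.sqrt_pos.mpr (by positivity)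
  have hrw : Real.sqrt (ap/aq) * Real.sqrt (ap*aq) = ap := by
    rw [← Real.sqrt_mul (by positivity)]
    have h : ap / aq * (ap * aq) = ap ^ 2 := by field_simp
    rw [h, Real.sqrt_sq hap.le]
  have hw : Real.sqrt (ap*aq) = aq * Real.sqrt (ap/aq) := by
    have h1 : aq * Real.sqrt (ap/aq) = Real.sqrt (aq^2) * Real.sqrt (ap/aq) := by
      rw [Real.sqrt_sq haq.le]
    rw [h1, ← Real.sqrt_mul (by positivity)]
    congr 1
    field_simp
  have hdiv : Real.sqrt (ap*aq) / Real.sqrt (ap/aq) = aq := by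
    rw [hw, mul_div_assoc, div_self hr0.ne', mul_one]
  have key : (Real.sqrt (ap/aq)) ^ ((m:ℤ) - (k:ℤ)) * (Real.sqrt (ap*aq)) ^ (m + k)
      = (Real.sqrt (ap/aq) * Real.sqrt (ap*aq)) ^ m
        * (Real.sqrt (ap*aq) / Real.sqrt (ap/aq)) ^ k := by
    rw [zpow_sub₀ hr0.ne', zpow_natCast, zpow_natCast, pow_add, div_pow, mul_pow]
    field_simp
  rw [key, hrw, hdiv]
lemma P0_pos {p s : ℝ} (hp0 : 0 < p) (hp1 : p < 1) (hs0 : 0 < s) (hs1 : s < 1) :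
    0 < 1 - (2 * s - s ^ 2) * p := by nlinarith [sq_nonneg (1 - s)]

lemma pairP_factor8 (p q s : ℝ) (hp0 : 0 < p) (hp1 : p < 1) (hq0 : 0 < q) (hq1 : q < 1)
    (hs0 : 0 < s) (hs1 : s < 1) (same x y : Bool) :
    pairP p q s same x y =
      (1 - (2*s - s^2)*p) ^ (if same = true then 1 else 0)
      * (1 - (2*s - s^2)*q) ^ (if same = false then 1 else 0)
      * (s*(1-s)*p / (1 - (2*s-s^2)*p)) ^ (if same = true ∧ x = true then 1 else 0)
      * (s*(1-s)*q / (1 - (2*s-s^2)*q)) ^ (if same = false ∧ x = true then 1 else 0)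
      * (s*(1-s)*p / (1 - (2*s-s^2)*p)) ^ (if same = true ∧ y = true then 1 else 0)
      * (s*(1-s)*q / (1 - (2*s-s^2)*q)) ^ (if same = false ∧ y = true then 1 else 0)
      * (s^2*p * (1 - (2*s-s^2)*p) / (s*(1-s)*p)^2) ^
          (if same = true ∧ x = true ∧ y = true then 1 else 0)
      * (s^2*q * (1 - (2*s-s^2)*q) / (s*(1-s)*q)^2) ^
          (if same = false ∧ x = true ∧ y = true then 1 else 0) := by
  have hP : (1 - (2*s-s^2)*p) ≠ 0 := (P0_pos hp0 hp1 hs0 hs1).ne'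
  have hQ : (1 - (2*s-s^2)*q) ≠ 0 := (P0_pos hq0 hq1 hs0 hs1).ne'
  have h1s : (0:ℝ) < 1 - s := by linarith
  have hp10 : s*(1-s)*p ≠ 0 := by positivity
  have hq10 : s*(1-s)*q ≠ 0 := by positivity
  set P := 1 - (2*s-s^2)*p with hPdef
  set Q := 1 - (2*s-s^2)*q with hQdef
  cases same <;> cases x <;> cases y <;>
    simp [pairP, ← hPdef, ← hQdef] <;> field_simp <;> ring

lemma common_edge_core {n : ℕ} (a b : Fin n → Fin n → Bool)
    (hsym : ∀ i j, a i j = a j i ∧ b i j = b j i)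
    (π : Equiv.Perm (Fin n)) (S0 : Set (Fin n)) (ρ0 : Fin n → Fin n)
    (hS : Sset n a b π = S0) (hρ : ∀ i ∉ S0, π i = ρ0 i) (i j : Fin n)
    (hij : a i j = true ∧ b (π i) (π j) = true) :
    i ∉ S0 ∧ j ∉ S0 ∧ π i = ρ0 i ∧ π j = ρ0 j := by
  have hiR : i ∉ Rset n a b π := fun h => h j hij
  have hjR : j ∉ Rset n a b π := fun h => h i ⟨(hsym i j).1 ▸ hij.1, (hsym (π i) (π j)).2 ▸ hij.2⟩
  have hiS : i ∉ S0 := by rw [← hS]; intro h; exact hiR h.1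
  have hjS : j ∉ S0 := by rw [← hS]; intro h; exact hjR h.1
  exact ⟨hiS, hjS, hρ i hiS, hρ j hjS⟩

lemma common_edge_iff {n : ℕ} (a b : Fin n → Fin n → Bool)
    (hsym : ∀ i j, a i j = a j i ∧ b i j = b j i) (ℓ2 : Fin n → Bool)
    (π : Equiv.Perm (Fin n)) (S0 : Set (Fin n)) (ρ0 : Fin n → Fin n)
    (hS : Sset n a b π = S0) (hρ : ∀ i ∉ S0, π i = ρ0 i) (i j : Fin n) (c : Bool → Bool → Prop) :
    (c (ℓ2 (π i)) (ℓ2 (π j)) ∧ a i j = true ∧ b (π i) (π j) = true) ↔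
    (i ∉ S0 ∧ j ∉ S0 ∧ c (ℓ2 (ρ0 i)) (ℓ2 (ρ0 j)) ∧ a i j = true ∧ b (ρ0 i) (ρ0 j) = true) := by
  constructor
  · rintro ⟨hc, ha, hb⟩
    obtain ⟨h1, h2, h3, h4⟩ := common_edge_core a b hsym π S0 ρ0 hS hρ i j ⟨ha, hb⟩
    exact ⟨h1, h2, h3 ▸ h4 ▸ hc, ha, h3 ▸ h4 ▸ hb⟩
  · rintro ⟨h1, h2, hc, ha, hb⟩
    have h3 := hρ i h1
    have h4 := hρ j h2
    exact ⟨h3 ▸ h4 ▸ hc, ha, h3 ▸ h4 ▸ hb⟩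

lemma beq_comm' (x y : Bool) : (x == y) = (y == x) := by cases x <;> cases y <;> rfl

lemma assemble (P Q ap aq gp gq : ℝ) (hap : 0 < ap) (haq : 0 < aq)
    (c1 c2 c3 c4 c5 c6 : ℕ) (m k : ℕ) :
    P^c1 * Q^c2 * ap^m * aq^k * ap^c3 * aq^c4 * gp^c5 * gq^c6
      = (P^c1 * Q^c2 * ap^c3 * aq^c4 * gp^c5 * gq^c6 * (Real.sqrt (ap*aq))^(m+k))
        * (Real.sqrt (ap/aq))^((m:ℤ) - (k:ℤ)) := by
  have key := pow_split ap aq hap haq m k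
  calc P^c1 * Q^c2 * ap^m * aq^k * ap^c3 * aq^c4 * gp^c5 * gq^c6
      = (P^c1 * Q^c2 * ap^c3 * aq^c4 * gp^c5 * gq^c6) * (ap^m * aq^k) := by ring
    _ = (P^c1 * Q^c2 * ap^c3 * aq^c4 * gp^c5 * gq^c6)
        * ((Real.sqrt (ap/aq))^((m:ℤ)-(k:ℤ)) * (Real.sqrt (ap*aq))^(m+k)) := by rw [key]
    _ = _ := by ring

lemma main_product {n : ℕ} (p q s : ℝ)
    (hp0 : 0 < p) (hp1 : p < 1) (hq0 : 0 < q) (hq1 : q < 1) (hs0 : 0 < s) (hs1 : s < 1)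
    (a b : Fin n → Fin n → Bool) (hsym : ∀ i j, a i j = a j i ∧ b i j = b j i)
    (ℓ2 : Fin n → Bool) (S0 : Set (Fin n)) (ρ0 : Fin n → Fin n)
    (π : Equiv.Perm (Fin n))
    (hS : Sset n a b π = S0) (hρ : ∀ i ∉ S0, π i = ρ0 i) :
    (∏ i : Fin n, ∏ j : Fin n,
        (if i < j then pairP p q s (ℓ2 (π i) == ℓ2 (π j)) (a i j) (b (π i) (π j)) else 1))
    = ((1 - (2*s-s^2)*p) ^ (∑ i : Fin n, ∑ j : Fin n, if i < j ∧ ℓ2 i = ℓ2 j then 1 else 0)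
      * (1 - (2*s-s^2)*q) ^ (∑ i : Fin n, ∑ j : Fin n, if i < j ∧ ℓ2 i ≠ ℓ2 j then 1 else 0)
      * (s*(1-s)*p / (1 - (2*s-s^2)*p)) ^
          (∑ i : Fin n, ∑ j : Fin n, if i < j ∧ ℓ2 i = ℓ2 j ∧ b i j = true then 1 else 0)
      * (s*(1-s)*q / (1 - (2*s-s^2)*q)) ^
          (∑ i : Fin n, ∑ j : Fin n, if i < j ∧ ℓ2 i ≠ ℓ2 j ∧ b i j = true then 1 else 0)
      * (s^2*p * (1 - (2*s-s^2)*p) / (s*(1-s)*p)^2) ^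
          (∑ i : Fin n, ∑ j : Fin n, if i < j ∧ i ∉ S0 ∧ j ∉ S0 ∧ ℓ2 (ρ0 i) = ℓ2 (ρ0 j)
              ∧ a i j = true ∧ b (ρ0 i) (ρ0 j) = true then 1 else 0)
      * (s^2*q * (1 - (2*s-s^2)*q) / (s*(1-s)*q)^2) ^
          (∑ i : Fin n, ∑ j : Fin n, if i < j ∧ i ∉ S0 ∧ j ∉ S0 ∧ ℓ2 (ρ0 i) ≠ ℓ2 (ρ0 j)
              ∧ a i j = true ∧ b (ρ0 i) (ρ0 j) = true then 1 else 0)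
      * (Real.sqrt ((s*(1-s)*p / (1 - (2*s-s^2)*p)) * (s*(1-s)*q / (1 - (2*s-s^2)*q)))) ^
          (∑ i : Fin n, ∑ j : Fin n, if i < j ∧ a i j = true then 1 else 0))
    * (Real.sqrt ((s * (1 - s) * p * (1 - (2 * s - s ^ 2) * q)) /
              ((1 - (2 * s - s ^ 2) * p) * (s * (1 - s) * q))))
        ^ ((∑ i : Fin n, ∑ j : Fin n,
              (if i < j ∧ ℓ2 (π i) = ℓ2 (π j) ∧ a i j = true then (1 : ℤ) else 0))
           - (∑ i : Fin n, ∑ j : Fin n,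
              (if i < j ∧ ℓ2 (π i) ≠ ℓ2 (π j) ∧ a i j = true then (1 : ℤ) else 0))) := by
  have hPpos := P0_pos hp0 hp1 hs0 hs1
  have hQpos := P0_pos hq0 hq1 hs0 hs1
  have h1s : (0:ℝ) < 1 - s := by linarith
  have hap : 0 < s*(1-s)*p / (1 - (2*s-s^2)*p) := by positivity
  have haq : 0 < s*(1-s)*q / (1 - (2*s-s^2)*q) := by positivity
  -- Step 1: pointwise factorization
  have hptw : ∀ i j : Fin n,
      (if i < j then pairP p q s (ℓ2 (π i) == ℓ2 (π j)) (a i j) (b (π i) (π j)) else 1)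
      = (if i < j then (1 - (2*s - s^2)*p) ^
            (if (ℓ2 (π i) == ℓ2 (π j)) = true then 1 else 0) else 1)
        * (if i < j then (1 - (2*s - s^2)*q) ^
            (if (ℓ2 (π i) == ℓ2 (π j)) = false then 1 else 0) else 1)
        * (if i < j then (s*(1-s)*p / (1 - (2*s-s^2)*p)) ^
            (if (ℓ2 (π i) == ℓ2 (π j)) = true ∧ a i j = true then 1 else 0) else 1)
        * (if i < j then (s*(1-s)*q / (1 - (2*s-s^2)*q)) ^
            (if (ℓ2 (π i) == ℓ2 (π j)) = false ∧ a i j = true then 1 else 0) else 1)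
        * (if i < j then (s*(1-s)*p / (1 - (2*s-s^2)*p)) ^
            (if (ℓ2 (π i) == ℓ2 (π j)) = true ∧ b (π i) (π j) = true then 1 else 0) else 1)
        * (if i < j then (s*(1-s)*q / (1 - (2*s-s^2)*q)) ^
            (if (ℓ2 (π i) == ℓ2 (π j)) = false ∧ b (π i) (π j) = true then 1 else 0) else 1)
        * (if i < j then (s^2*p * (1 - (2*s-s^2)*p) / (s*(1-s)*p)^2) ^
            (if (ℓ2 (π i) == ℓ2 (π j)) = true ∧ a i j = true ∧ b (π i) (π j) = true
              then 1 else 0) else 1)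
        * (if i < j then (s^2*q * (1 - (2*s-s^2)*q) / (s*(1-s)*q)^2) ^
            (if (ℓ2 (π i) == ℓ2 (π j)) = false ∧ a i j = true ∧ b (π i) (π j) = true
              then 1 else 0) else 1) := by
    intro i j
    by_cases h : i < j
    · simp only [if_pos h]
      exact pairP_factor8 p q s hp0 hp1 hq0 hq1 hs0 hs1 _ _ _
    · simp [h]
  calc (∏ i : Fin n, ∏ j : Fin n,
        (if i < j then pairP p q s (ℓ2 (π i) == ℓ2 (π j)) (a i j) (b (π i) (π j)) else 1))
      = (1 - (2*s - s^2)*p) ^ (∑ i : Fin n, ∑ j : Fin n,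
            if i < j then (if (ℓ2 (π i) == ℓ2 (π j)) = true then 1 else 0) else 0)
        * (1 - (2*s - s^2)*q) ^ (∑ i : Fin n, ∑ j : Fin n,
            if i < j then (if (ℓ2 (π i) == ℓ2 (π j)) = false then 1 else 0) else 0)
        * (s*(1-s)*p / (1 - (2*s-s^2)*p)) ^ (∑ i : Fin n, ∑ j : Fin n,
            if i < j then (if (ℓ2 (π i) == ℓ2 (π j)) = true ∧ a i j = true then 1 else 0) else 0)
        * (s*(1-s)*q / (1 - (2*s-s^2)*q)) ^ (∑ i : Fin n, ∑ j : Fin n,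
            if i < j then (if (ℓ2 (π i) == ℓ2 (π j)) = false ∧ a i j = true then 1 else 0) else 0)
        * (s*(1-s)*p / (1 - (2*s-s^2)*p)) ^ (∑ i : Fin n, ∑ j : Fin n,
            if i < j then (if (ℓ2 (π i) == ℓ2 (π j)) = true ∧ b (π i) (π j) = true
              then 1 else 0) else 0)
        * (s*(1-s)*q / (1 - (2*s-s^2)*q)) ^ (∑ i : Fin n, ∑ j : Fin n,
            if i < j then (if (ℓ2 (π i) == ℓ2 (π j)) = false ∧ b (π i) (π j) = true
              then 1 else 0) else 0)
        * (s^2*p * (1 - (2*s-s^2)*p) / (s*(1-s)*p)^2) ^ (∑ i : Fin n, ∑ j : Fin n,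
            if i < j then (if (ℓ2 (π i) == ℓ2 (π j)) = true ∧ a i j = true ∧ b (π i) (π j) = true
              then 1 else 0) else 0)
        * (s^2*q * (1 - (2*s-s^2)*q) / (s*(1-s)*q)^2) ^ (∑ i : Fin n, ∑ j : Fin n,
            if i < j then (if (ℓ2 (π i) == ℓ2 (π j)) = false ∧ a i j = true ∧ b (π i) (π j) = true
              then 1 else 0) else 0) := by
        simp_rw [hptw]
        simp only [Finset.prod_mul_distrib]
        rw [prod_pairs_pow, prod_pairs_pow, prod_pairs_pow, prod_pairs_pow,
          prod_pairs_pow, prod_pairs_pow, prod_pairs_pow, prod_pairs_pow]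
    _ = _ := by
      have e1 : (∑ i : Fin n, ∑ j : Fin n,
            if i < j then (if (ℓ2 (π i) == ℓ2 (π j)) = true then 1 else 0) else 0)
          = (∑ i : Fin n, ∑ j : Fin n, if i < j ∧ ℓ2 i = ℓ2 j then 1 else 0) := by
        have h := sum_pairs_reindex (fun u v => if (ℓ2 u == ℓ2 v) = true then 1 else 0)
          (fun u v => by simp [beq_comm']) π
        rw [h]
        refine Finset.sum_congr rfl fun i _ => Finset.sum_congr rfl fun j _ => ?_
        by_cases hij : i < j <;> simp [hij, beq_iff_eq]
      have e2 : (∑ i : Fin n, ∑ j : Fin n,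
            if i < j then (if (ℓ2 (π i) == ℓ2 (π j)) = false then 1 else 0) else 0)
          = (∑ i : Fin n, ∑ j : Fin n, if i < j ∧ ℓ2 i ≠ ℓ2 j then 1 else 0) := by
        have h := sum_pairs_reindex (fun u v => if (ℓ2 u == ℓ2 v) = false then 1 else 0)
          (fun u v => by simp [beq_comm']) π
        rw [h]
        refine Finset.sum_congr rfl fun i _ => Finset.sum_congr rfl fun j _ => ?_
        by_cases hij : i < j <;> simp [hij]
      have e4 : (∑ i : Fin n, ∑ j : Fin n,
            if i < j then (if (ℓ2 (π i) == ℓ2 (π j)) = true ∧ b (π i) (π j) = true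
              then 1 else 0) else 0)
          = (∑ i : Fin n, ∑ j : Fin n,
              if i < j ∧ ℓ2 i = ℓ2 j ∧ b i j = true then 1 else 0) := by
        have h := sum_pairs_reindex
          (fun u v => if (ℓ2 u == ℓ2 v) = true ∧ b u v = true then 1 else 0)
          (fun u v => by simp only [beq_comm' (ℓ2 u) (ℓ2 v), (hsym u v).2]) π
        rw [h]
        refine Finset.sum_congr rfl fun i _ => Finset.sum_congr rfl fun j _ => ?_
        by_cases hij : i < j <;> simp [hij, beq_iff_eq, and_assoc]
      have e6 : (∑ i : Fin n, ∑ j : Fin n,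
            if i < j then (if (ℓ2 (π i) == ℓ2 (π j)) = false ∧ b (π i) (π j) = true
              then 1 else 0) else 0)
          = (∑ i : Fin n, ∑ j : Fin n,
              if i < j ∧ ℓ2 i ≠ ℓ2 j ∧ b i j = true then 1 else 0) := by
        have h := sum_pairs_reindex
          (fun u v => if (ℓ2 u == ℓ2 v) = false ∧ b u v = true then 1 else 0)
          (fun u v => by simp only [beq_comm' (ℓ2 u) (ℓ2 v), (hsym u v).2]) π
        rw [h]
        refine Finset.sum_congr rfl fun i _ => Finset.sum_congr rfl fun j _ => ?_
        by_cases hij : i < j <;> simp [hij, and_assoc]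
      have e7 : (∑ i : Fin n, ∑ j : Fin n,
            if i < j then (if (ℓ2 (π i) == ℓ2 (π j)) = true ∧ a i j = true
                ∧ b (π i) (π j) = true then 1 else 0) else 0)
          = (∑ i : Fin n, ∑ j : Fin n,
              if i < j ∧ i ∉ S0 ∧ j ∉ S0 ∧ ℓ2 (ρ0 i) = ℓ2 (ρ0 j)
                ∧ a i j = true ∧ b (ρ0 i) (ρ0 j) = true then 1 else 0) := by
        refine Finset.sum_congr rfl fun i _ => Finset.sum_congr rfl fun j _ => ?_
        have hcond : ((ℓ2 (π i) = ℓ2 (π j)) ∧ a i j = true ∧ b (π i) (π j) = true)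
            ↔ (i ∉ S0 ∧ j ∉ S0 ∧ ℓ2 (ρ0 i) = ℓ2 (ρ0 j) ∧ a i j = true
                ∧ b (ρ0 i) (ρ0 j) = true) := by
          constructor
          · rintro ⟨hc, ha, hb⟩
            obtain ⟨h1, h2, h3, h4⟩ := common_edge_core a b hsym π S0 ρ0 hS hρ i j ⟨ha, hb⟩
            exact ⟨h1, h2, by rw [← h3, ← h4]; exact hc, ha, by rw [← h3, ← h4]; exact hb⟩
          · rintro ⟨h1, h2, hc, ha, hb⟩
            have h3 := hρ i h1; have h4 := hρ j h2
            exact ⟨by rw [h3, h4]; exact hc, ha, by rw [h3, h4]; exact hb⟩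
        by_cases hij : i < j <;> simp [hij, beq_iff_eq, hcond]
      have e8 : (∑ i : Fin n, ∑ j : Fin n,
            if i < j then (if (ℓ2 (π i) == ℓ2 (π j)) = false ∧ a i j = true
                ∧ b (π i) (π j) = true then 1 else 0) else 0)
          = (∑ i : Fin n, ∑ j : Fin n,
              if i < j ∧ i ∉ S0 ∧ j ∉ S0 ∧ ℓ2 (ρ0 i) ≠ ℓ2 (ρ0 j)
                ∧ a i j = true ∧ b (ρ0 i) (ρ0 j) = true then 1 else 0) := by
        refine Finset.sum_congr rfl fun i _ => Finset.sum_congr rfl fun j _ => ?_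
        have hcond : ((ℓ2 (π i) ≠ ℓ2 (π j)) ∧ a i j = true ∧ b (π i) (π j) = true)
            ↔ (i ∉ S0 ∧ j ∉ S0 ∧ ℓ2 (ρ0 i) ≠ ℓ2 (ρ0 j) ∧ a i j = true
                ∧ b (ρ0 i) (ρ0 j) = true) := by
          constructor
          · rintro ⟨hc, ha, hb⟩
            obtain ⟨h1, h2, h3, h4⟩ := common_edge_core a b hsym π S0 ρ0 hS hρ i j ⟨ha, hb⟩
            exact ⟨h1, h2, by rw [← h3, ← h4]; exact hc, ha, by rw [← h3, ← h4]; exact hb⟩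
          · rintro ⟨h1, h2, hc, ha, hb⟩
            have h3 := hρ i h1; have h4 := hρ j h2
            exact ⟨by rw [h3, h4]; exact hc, ha, by rw [h3, h4]; exact hb⟩
        by_cases hij : i < j <;> simp [hij, hcond]
      have hmz : (∑ i : Fin n, ∑ j : Fin n,
            (if i < j ∧ ℓ2 (π i) = ℓ2 (π j) ∧ a i j = true then (1 : ℤ) else 0))
          = ((∑ i : Fin n, ∑ j : Fin n,
              if i < j then (if (ℓ2 (π i) == ℓ2 (π j)) = true ∧ a i j = true
                then 1 else 0) else 0 : ℕ) : ℤ) := by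
        push_cast
        refine Finset.sum_congr rfl fun i _ => Finset.sum_congr rfl fun j _ => ?_
        by_cases hij : i < j <;> simp [hij, beq_iff_eq]
      have hkz : (∑ i : Fin n, ∑ j : Fin n,
            (if i < j ∧ ℓ2 (π i) ≠ ℓ2 (π j) ∧ a i j = true then (1 : ℤ) else 0))
          = ((∑ i : Fin n, ∑ j : Fin n,
              if i < j then (if (ℓ2 (π i) == ℓ2 (π j)) = false ∧ a i j = true
                then 1 else 0) else 0 : ℕ) : ℤ) := by
        push_cast
        refine Finset.sum_congr rfl fun i _ => Finset.sum_congr rfl fun j _ => ?_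
        by_cases hij : i < j <;> simp [hij]
      have hEa : (∑ i : Fin n, ∑ j : Fin n,
            if i < j then (if (ℓ2 (π i) == ℓ2 (π j)) = true ∧ a i j = true
              then 1 else 0) else 0)
          + (∑ i : Fin n, ∑ j : Fin n,
            if i < j then (if (ℓ2 (π i) == ℓ2 (π j)) = false ∧ a i j = true
              then 1 else 0) else 0)
          = (∑ i : Fin n, ∑ j : Fin n, if i < j ∧ a i j = true then 1 else 0) := by
        rw [← Finset.sum_add_distrib]
        refine Finset.sum_congr rfl fun i _ => ?_
        rw [← Finset.sum_add_distrib]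
        refine Finset.sum_congr rfl fun j _ => ?_
        by_cases hij : i < j
        · cases hb : (ℓ2 (π i) == ℓ2 (π j)) <;> simp [hij, hb]
        · simp [hij]
      have hr : (Real.sqrt ((s * (1 - s) * p * (1 - (2 * s - s ^ 2) * q)) /
              ((1 - (2 * s - s ^ 2) * p) * (s * (1 - s) * q))))
          = Real.sqrt ((s*(1-s)*p / (1 - (2*s-s^2)*p)) / (s*(1-s)*q / (1 - (2*s-s^2)*q))) := by
        have hh1 : (1 - (2 * s - s ^ 2) * p) ≠ 0 := hPpos.ne'
        have hh2 : (1 - (2 * s - s ^ 2) * q) ≠ 0 := hQpos.ne'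
        have hh3 : s * (1 - s) * q ≠ 0 := by positivity
        congr 1
        field_simp
      rw [e1, e2, e4, e6, e7, e8, hmz, hkz, hr, ← hEa]
      exact assemble _ _ _ _ _ _ hap haq _ _ _ _ _ _ _ _


/-- posterior of `π*` in the correlated SBM given `A`, `B`, the `G₂`-labels
`σ*²`, the pruned singleton set `S*`, and the restriction of `π*` to `[n] \ S*`: there is
a constant `C₂` (depending only on the conditioning data) with
`P(π* = π | data) = C₂ (√(p₁₀q₀₀/(p₀₀q₁₀)))^{ν⁺(π) − ν⁻(π)} 1(π ∈ A*)`. -/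
theorem statement16 {Ω : Type} [MeasurableSpace Ω] (ℙ : Measure Ω)
    [IsProbabilityMeasure ℙ] (n : ℕ) (p q s : ℝ)
    (hp0 : 0 < p) (hp1 : p < 1) (hq0 : 0 < q) (hq1 : q < 1) (hs0 : 0 < s) (hs1 : s < 1)
    (πs : Ω → Equiv.Perm (Fin n)) (σ1 : Ω → Fin n → Bool)
    (A B' : Ω → Fin n → Fin n → Bool)
    (hmeas : ∀ (π0 : Equiv.Perm (Fin n)) (ℓ : Fin n → Bool)
        (e1 e2 : Fin n → Fin n → Bool),
      MeasurableSet {ω | πs ω = π0 ∧ σ1 ω = ℓ ∧ A ω = e1 ∧ B' ω = e2})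
    -- the joint law of (π*, σ*¹, A, B'): π* uniform and independent, labels i.i.d.
    -- uniform, and given these the pairs (A_{ij}, B'_{ij}) independent with law pairP
    (hvalid : ℙ {ω | (∀ i j, A ω i j = A ω j i ∧ B' ω i j = B' ω j i) ∧
        ∀ i, A ω i i = false ∧ B' ω i i = false} = 1)
    (hlaw : ∀ (π0 : Equiv.Perm (Fin n)) (ℓ : Fin n → Bool)
        (e1 e2 : Fin n → Fin n → Bool),
      (∀ i j, e1 i j = e1 j i ∧ e2 i j = e2 j i) →
      (∀ i, e1 i i = false ∧ e2 i i = false) →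
      (ℙ {ω | πs ω = π0 ∧ σ1 ω = ℓ ∧ A ω = e1 ∧ B' ω = e2}).toReal =
        (1 / (Nat.factorial n : ℝ)) * (1 / 2 : ℝ) ^ n *
          ∏ i : Fin n, ∏ j : Fin n,
            (if i < j then pairP p q s (ℓ i == ℓ j) (e1 i j) (e2 i j) else 1))
    -- the relabeled adjacency of G₂ and the G₂-labels
    (B : Ω → Fin n → Fin n → Bool)
    (hB : ∀ ω i j, B ω i j = B' ω ((πs ω).symm i) ((πs ω).symm j))
    (σ2 : Ω → Fin n → Bool) (hσ2 : ∀ ω i, σ2 ω i = σ1 ω ((πs ω).symm i))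
    -- the observed data
    (a b : Fin n → Fin n → Bool) (ℓ2 : Fin n → Bool)
    (S0 : Set (Fin n)) (ρ0 : Fin n → Fin n) :
    ∃ C2 : ℝ, ∀ π : Equiv.Perm (Fin n),
      (ProbabilityTheory.cond ℙ
          {ω | A ω = a ∧ B ω = b ∧ σ2 ω = ℓ2 ∧
               Sset n (A ω) (B ω) (πs ω) = S0 ∧ ∀ i, i ∉ S0 → πs ω i = ρ0 i}
          {ω | πs ω = π}).toReal
        = C2 *
          (Real.sqrt ((s * (1 - s) * p * (1 - (2 * s - s ^ 2) * q)) /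
              ((1 - (2 * s - s ^ 2) * p) * (s * (1 - s) * q))))
            ^ ((∑ i : Fin n, ∑ j : Fin n,
                  (if i < j ∧ ℓ2 (π i) = ℓ2 (π j) ∧ a i j = true then (1 : ℤ) else 0))
               - (∑ i : Fin n, ∑ j : Fin n,
                  (if i < j ∧ ℓ2 (π i) ≠ ℓ2 (π j) ∧ a i j = true then (1 : ℤ) else 0)))
          * (if Sset n a b π = S0 ∧ ∀ i, i ∉ S0 → π i = ρ0 i then 1 else 0) := by
  classical
  set E := {ω | A ω = a ∧ B ω = b ∧ σ2 ω = ℓ2 ∧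
      Sset n (A ω) (B ω) (πs ω) = S0 ∧ ∀ i, i ∉ S0 → πs ω i = ρ0 i} with hEdef
  -- the key decomposition of E ∩ {πs = π0}
  have hkey : ∀ π0 : Equiv.Perm (Fin n),
      E ∩ {ω | πs ω = π0}
      = if Sset n a b π0 = S0 ∧ (∀ i, i ∉ S0 → π0 i = ρ0 i) then
          {ω | πs ω = π0 ∧ σ1 ω = (fun i => ℓ2 (π0 i)) ∧ A ω = a
            ∧ B' ω = (fun u v => b (π0 u) (π0 v))} else ∅ := by
    intro π0
    by_cases hc : Sset n a b π0 = S0 ∧ (∀ i, i ∉ S0 → π0 i = ρ0 i)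
    · rw [if_pos hc]
      ext ω
      simp only [hEdef, Set.mem_inter_iff, Set.mem_setOf_eq]
      constructor
      · rintro ⟨⟨hA1, hB1, hσe, hS1, hπ1⟩, hπ0⟩
        refine ⟨hπ0, ?_, hA1, ?_⟩
        · funext u
          have h1 := hσ2 ω (π0 u)
          rw [hπ0, Equiv.symm_apply_apply] at h1
          rw [← h1, hσe]
        · funext u v
          have h1 := hB ω (π0 u) (π0 v)
          rw [hπ0, Equiv.symm_apply_apply, Equiv.symm_apply_apply] at h1
          rw [← h1, hB1]
      · rintro ⟨hπ0, hσ1e, hAe, hB'e⟩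
        have hBe : B ω = b := by
          funext i j
          rw [hB ω i j, hπ0, hB'e]
          simp
        have hσe : σ2 ω = ℓ2 := by
          funext i
          rw [hσ2 ω i, hπ0, hσ1e]
          simp
        exact ⟨⟨hAe, hBe, hσe, by rw [hAe, hBe, hπ0]; exact hc.1,
          fun i hi => by rw [hπ0]; exact hc.2 i hi⟩, hπ0⟩
    · rw [if_neg hc]
      ext ω
      simp only [hEdef, Set.mem_inter_iff, Set.mem_setOf_eq, Set.mem_empty_iff_false,
        iff_false, not_and]
      intro h1 h2
      rcases h1 with ⟨hA1, hB1, hσe, hS1, hπ1⟩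
      exact absurd ⟨by rw [← hA1, ← hB1, ← h2]; exact hS1,
        fun i hi => by rw [← h2]; exact hπ1 i hi⟩ hc
  -- measurability of E
  have hEm : MeasurableSet E := by
    have hEu : E = ⋃ π0 : Equiv.Perm (Fin n), E ∩ {ω | πs ω = π0} := by
      ext ω
      constructor
      · intro h; exact Set.mem_iUnion.mpr ⟨πs ω, h, rfl⟩
      · intro h; obtain ⟨π0, h1, _⟩ := Set.mem_iUnion.mp h; exact h1
    rw [hEu]
    refine MeasurableSet.iUnion fun π0 => ?_
    rw [hkey π0]
    split
    · exact hmeas π0 _ a _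
    · exact MeasurableSet.empty
  -- a helper producing the answer when ℙ E = 0
  have hzero : ∀ π : Equiv.Perm (Fin n), ℙ E = 0 →
      (ProbabilityTheory.cond ℙ E {ω | πs ω = π}).toReal = 0 := by
    intro π h0
    have hc0 : ProbabilityTheory.cond ℙ E = 0 := by
      unfold ProbabilityTheory.cond
      rw [Measure.restrict_eq_zero.mpr h0, smul_zero]
    rw [hc0]
    simp
  by_cases hval : (∀ i j, a i j = a j i ∧ b i j = b j i) ∧
      (∀ i, a i i = false ∧ b i i = false)
  swap
  · -- degenerate data: the conditioning event is null
    have hVm : MeasurableSet {ω | (∀ i j, A ω i j = A ω j i ∧ B' ω i j = B' ω j i) ∧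
        ∀ i, A ω i i = false ∧ B' ω i i = false} := by
      have hVu : {ω | (∀ i j, A ω i j = A ω j i ∧ B' ω i j = B' ω j i) ∧
          ∀ i, A ω i i = false ∧ B' ω i i = false}
          = ⋃ π0 : Equiv.Perm (Fin n), ⋃ ℓ : Fin n → Bool, ⋃ e1 : Fin n → Fin n → Bool,
              ⋃ e2 : Fin n → Fin n → Bool,
            if (∀ i j, e1 i j = e1 j i ∧ e2 i j = e2 j i) ∧
                (∀ i, e1 i i = false ∧ e2 i i = false)
            then {ω | πs ω = π0 ∧ σ1 ω = ℓ ∧ A ω = e1 ∧ B' ω = e2} else ∅ := by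
        ext ω
        simp only [Set.mem_iUnion, Set.mem_setOf_eq]
        constructor
        · intro h
          refine ⟨πs ω, σ1 ω, A ω, B' ω, ?_⟩
          rw [if_pos h]
          exact ⟨rfl, rfl, rfl, rfl⟩
        · rintro ⟨π0, ℓ, e1, e2, h⟩
          by_cases hP : (∀ i j, e1 i j = e1 j i ∧ e2 i j = e2 j i) ∧
              (∀ i, e1 i i = false ∧ e2 i i = false)
          · rw [if_pos hP] at h
            obtain ⟨-, -, h3, h4⟩ := h
            rw [h3, h4]
            exact hP
          · rw [if_neg hP] at h
            exact absurd h (Set.notMem_empty ω)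
      rw [hVu]
      refine MeasurableSet.iUnion fun π0 => MeasurableSet.iUnion fun ℓ =>
        MeasurableSet.iUnion fun e1 => MeasurableSet.iUnion fun e2 => ?_
      split
      · exact hmeas π0 ℓ e1 e2
      · exact MeasurableSet.empty
    have hE0 : ℙ E = 0 := by
      have hsub : E ⊆ {ω | (∀ i j, A ω i j = A ω j i ∧ B' ω i j = B' ω j i) ∧
          ∀ i, A ω i i = false ∧ B' ω i i = false}ᶜ := by
        intro ω hω hωV
        obtain ⟨hA1, hB1, -, -, -⟩ := hω
        have hb : ∀ u v, b u v = B' ω ((πs ω).symm u) ((πs ω).symm v) := by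
          intro u v
          rw [← hB1]
          exact hB ω u v
        refine hval ⟨fun i j => ⟨by rw [← hA1]; exact (hωV.1 i j).1, ?_⟩,
          fun i => ⟨by rw [← hA1]; exact (hωV.2 i).1, ?_⟩⟩
        · rw [hb i j, hb j i]
          exact (hωV.1 ((πs ω).symm i) ((πs ω).symm j)).2
        · rw [hb i i]
          exact (hωV.2 ((πs ω).symm i)).2
      have h1 : ℙ {ω | (∀ i j, A ω i j = A ω j i ∧ B' ω i j = B' ω j i) ∧
          ∀ i, A ω i i = false ∧ B' ω i i = false}ᶜ = 0 := by
        rw [measure_compl hVm (measure_ne_top _ _), hvalid, measure_univ, tsub_self]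
      exact le_antisymm (le_trans (measure_mono hsub) h1.le) (zero_le')
    refine ⟨0, fun π => ?_⟩
    rw [hzero π hE0]
    ring
  by_cases h0 : ℙ E = 0
  · refine ⟨0, fun π => ?_⟩
    rw [hzero π h0]
    ring
  -- the main case
  obtain ⟨hsymab, hdiagab⟩ := hval
  have hsymab' : ∀ i j, a i j = a j i ∧ b i j = b j i := hsymab
  refine ⟨((1 / (Nat.factorial n : ℝ)) * (1 / 2 : ℝ) ^ n *
      ((1 - (2*s-s^2)*p) ^ (∑ i : Fin n, ∑ j : Fin n, if i < j ∧ ℓ2 i = ℓ2 j then 1 else 0)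
      * (1 - (2*s-s^2)*q) ^ (∑ i : Fin n, ∑ j : Fin n, if i < j ∧ ℓ2 i ≠ ℓ2 j then 1 else 0)
      * (s*(1-s)*p / (1 - (2*s-s^2)*p)) ^
          (∑ i : Fin n, ∑ j : Fin n, if i < j ∧ ℓ2 i = ℓ2 j ∧ b i j = true then 1 else 0)
      * (s*(1-s)*q / (1 - (2*s-s^2)*q)) ^
          (∑ i : Fin n, ∑ j : Fin n, if i < j ∧ ℓ2 i ≠ ℓ2 j ∧ b i j = true then 1 else 0)
      * (s^2*p * (1 - (2*s-s^2)*p) / (s*(1-s)*p)^2) ^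
          (∑ i : Fin n, ∑ j : Fin n, if i < j ∧ i ∉ S0 ∧ j ∉ S0 ∧ ℓ2 (ρ0 i) = ℓ2 (ρ0 j)
              ∧ a i j = true ∧ b (ρ0 i) (ρ0 j) = true then 1 else 0)
      * (s^2*q * (1 - (2*s-s^2)*q) / (s*(1-s)*q)^2) ^
          (∑ i : Fin n, ∑ j : Fin n, if i < j ∧ i ∉ S0 ∧ j ∉ S0 ∧ ℓ2 (ρ0 i) ≠ ℓ2 (ρ0 j)
              ∧ a i j = true ∧ b (ρ0 i) (ρ0 j) = true then 1 else 0)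
      * (Real.sqrt ((s*(1-s)*p / (1 - (2*s-s^2)*p)) * (s*(1-s)*q / (1 - (2*s-s^2)*q)))) ^
          (∑ i : Fin n, ∑ j : Fin n, if i < j ∧ a i j = true then 1 else 0)))
      / (ℙ E).toReal, fun π => ?_⟩
  rw [ProbabilityTheory.cond_apply hEm ℙ {ω | πs ω = π}, hkey π]
  by_cases hc : Sset n a b π = S0 ∧ (∀ i, i ∉ S0 → π i = ρ0 i)
  · rw [if_pos hc]
    have hlawval := hlaw π (fun i => ℓ2 (π i)) a (fun u v => b (π u) (π v))
      (fun i j => ⟨(hsymab i j).1, (hsymab (π i) (π j)).2⟩)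
      (fun i => ⟨(hdiagab i).1, (hdiagab (π i)).2⟩)
    rw [main_product p q s hp0 hp1 hq0 hq1 hs0 hs1 a b hsymab' ℓ2 S0 ρ0 π hc.1 hc.2]
      at hlawval
    rw [ENNReal.toReal_mul, ENNReal.toReal_inv, hlawval, if_pos hc]
    ring
  · rw [if_neg hc, measure_empty, if_neg hc]
    simp
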